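/- Let q ≥ 2, n ≥ 1, and let 𝐚 = (A_0, …, A_n) be a quasicode of length n over an alphabet of size q whose support consists exactly of the integers a_1 < a_2 < ⋯ < a_s, and suppose 𝐚 is a (2s−1)-design. Then the function h : {0,1,…,n} → ℝ given by h(x) = (a_1 − x)(a_2 − x)⋯(a_s − x) is positive definite. -/

import Mathlib

open Finset

/-- The Krawtchouk polynomial `K_k(x; n, q)` evaluated at a natural number `x`. -/
noncomputable def kraw (n q k x : ℕ) : ℝ :=
  ∑ j ∈ Finset.range (k+1),
    (-1 : ℝ)^j * ((q : ℝ) - 1)^(k-j) * (x.choose j : ℝ) * ((n-x).choose (k-j) : ℝ)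

/-- The finite difference operator `Δf(m) = f(m+1) − f(m)`. -/
def fdiff (f : ℕ → ℝ) : ℕ → ℝ := fun m => f (m+1) - f m

/-- `f` is completely monotonic on `{a, a+1, …, b}`:
`(−1)^k Δ^k f(i) ≥ 0` whenever `k ≥ 0` and `a ≤ i ≤ b − k`. -/
def CompletelyMonotonicOn (f : ℕ → ℝ) (a b : ℕ) : Prop :=
  ∀ k i, a ≤ i → i + k ≤ b → 0 ≤ (-1 : ℝ)^k * (fdiff^[k] f) i

/-- A quasicode of length `n` and size `N` over an alphabet of size `q`,
recorded via its entries `A 0, …, A n`. -/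
structure IsQuasicode (q n : ℕ) (N : ℝ) (A : ℕ → ℝ) : Prop where
  nonneg : ∀ i, i ≤ n → 0 ≤ A i
  delsarte : ∀ j, j ≤ n → 0 ≤ ∑ i ∈ Finset.range (n+1), A i * kraw n q j i
  size : ∑ i ∈ Finset.range (n+1), A i = N
  zeroth : A 0 = 1

/-- A universally optimal quasicode: a quasicode that minimizes `f`-energy
among all quasicodes of the same length and size, for every completely
monotonic potential function `f`. -/
def IsUOQuasicode (q n : ℕ) (N : ℝ) (A : ℕ → ℝ) : Prop :=
  IsQuasicode q n N A ∧
    ∀ f : ℕ → ℝ, CompletelyMonotonicOn f 0 n →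
      ∀ B : ℕ → ℝ, IsQuasicode q n N B →
        ∑ i ∈ Finset.range (n+1), f i * A i ≤ ∑ i ∈ Finset.range (n+1), f i * B i

/-- The quasicode `A` (of size `N`) is a `t`-design: `A^⊥_j = 0` for `1 ≤ j ≤ t`. -/
def IsDesign (q n t : ℕ) (A : ℕ → ℝ) : Prop :=
  ∀ j, 1 ≤ j → j ≤ t → ∑ i ∈ Finset.range (n+1), A i * kraw n q j i = 0

/-- `h : {0,…,n} → ℝ` is positive definite: its (unique) Krawtchouk
coefficients are all nonnegative. -/
def PositiveDefinite (q n : ℕ) (h : ℕ → ℝ) : Prop :=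
  ∃ c : ℕ → ℝ, (∀ j, j ≤ n → 0 ≤ c j) ∧
    ∀ i, i ≤ n → h i = ∑ j ∈ Finset.range (n+1), c j * kraw n q j i

open scoped Classical in
/-- The support of a quasicode: `{i > 0 : A i ≠ 0}`. -/
noncomputable def supp (n : ℕ) (A : ℕ → ℝ) : Finset ℕ :=
  (Finset.Icc 1 n).filter (fun i => A i ≠ 0)


open Polynomial

lemma descFactorial_cast (m r : ℕ) : (m.descFactorial r : ℝ) = ∏ i ∈ range r, ((m:ℝ) - i) := by
  induction r with
  | zero => simp
  | succ r ih =>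
    rw [Finset.prod_range_succ, ← ih, Nat.descFactorial_succ]
    rcases lt_or_ge r m with hr | hr
    · push_cast [Nat.cast_sub hr.le]; ring
    · rcases eq_or_lt_of_le hr with he | hl
      · subst he; simp
      · rw [Nat.descFactorial_eq_zero_iff_lt.mpr hl]
        simp [Nat.sub_eq_zero_of_le hr]

lemma choose_cast_eq (m r : ℕ) :
    (m.choose r : ℝ) = (∏ i ∈ range r, ((m:ℝ) - i)) / r.factorial := by
  rw [← descFactorial_cast, Nat.descFactorial_eq_factorial_mul_choose]
  push_cast
  field_simp

noncomputable def cp (m : ℕ) : ℝ[X] :=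
  C ((m.factorial:ℝ))⁻¹ * ∏ i ∈ range m, (X - C (i:ℝ))

noncomputable def cq (n r : ℕ) : ℝ[X] :=
  C ((r.factorial:ℝ))⁻¹ * ∏ i ∈ range r, (C ((n:ℝ) - i) - X)

lemma cp_eval (m x : ℕ) : (cp m).eval (x:ℝ) = x.choose m := by
  rw [choose_cast_eq, cp]
  simp [eval_prod, div_eq_inv_mul]

lemma cq_eval (n r x : ℕ) (hx : x ≤ n) : (cq n r).eval (x:ℝ) = ((n-x).choose r : ℝ) := by
  rw [choose_cast_eq, cq]
  simp only [eval_mul, eval_C, eval_prod, eval_sub, eval_X]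
  rw [div_eq_inv_mul]
  congr 1
  apply Finset.prod_congr rfl
  intro i _
  rw [Nat.cast_sub hx]
  ring

lemma prod_C_sub_X_eq (c : ℕ → ℝ) (r : ℕ) :
    ∏ i ∈ range r, (C (c i) - X) = C ((-1:ℝ)^r) * ∏ i ∈ range r, (X - C (c i)) := by
  have : ∀ i ∈ range r, (C (c i) - X) = (-1 : ℝ[X]) * (X - C (c i)) := by intros; ring
  rw [Finset.prod_congr rfl this, Finset.prod_mul_distrib, Finset.prod_const]
  norm_num [← C_pow]

lemma natDegree_prod_X_sub_C (c : ℕ → ℝ) (r : ℕ) :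
    (∏ i ∈ range r, (X - C (c i))).natDegree = r := by
  rw [Polynomial.natDegree_prod_of_monic _ _ (fun i _ => monic_X_sub_C _)]
  simp

lemma natDegree_prod_C_sub_X_le (c : ℕ → ℝ) (r : ℕ) :
    (∏ i ∈ range r, (C (c i) - X)).natDegree ≤ r := by
  rw [prod_C_sub_X_eq]
  exact (natDegree_C_mul_le _ _).trans (natDegree_prod_X_sub_C c r).le

lemma coeff_prod_C_sub_X (c : ℕ → ℝ) (r : ℕ) :
    (∏ i ∈ range r, (C (c i) - X)).coeff r = (-1:ℝ)^r := by
  have hm : (∏ i ∈ range r, (X - C (c i))).Monic :=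
    monic_prod_of_monic _ _ (fun i _ => monic_X_sub_C _)
  rw [prod_C_sub_X_eq, coeff_C_mul]
  have := hm.coeff_natDegree
  rw [natDegree_prod_X_sub_C] at this
  rw [this, mul_one]

lemma cp_natDegree (m : ℕ) : (cp m).natDegree ≤ m :=
  (natDegree_C_mul_le _ _).trans (natDegree_prod_X_sub_C _ m).le

lemma cp_coeff (m : ℕ) : (cp m).coeff m = ((m.factorial:ℝ))⁻¹ := by
  have hm : (∏ i ∈ range m, (X - C ((i:ℕ):ℝ))).Monic :=
    monic_prod_of_monic _ _ (fun i _ => monic_X_sub_C _)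
  have := hm.coeff_natDegree
  rw [natDegree_prod_X_sub_C] at this
  rw [cp, coeff_C_mul, this, mul_one]

lemma cq_natDegree (n r : ℕ) : (cq n r).natDegree ≤ r :=
  (natDegree_C_mul_le _ _).trans (natDegree_prod_C_sub_X_le _ r)

lemma cq_coeff (n r : ℕ) : (cq n r).coeff r = (-1:ℝ)^r * ((r.factorial:ℝ))⁻¹ := by
  rw [cq, coeff_C_mul, coeff_prod_C_sub_X]; ring

noncomputable def KP (n q j : ℕ) : ℝ[X] :=
  ∑ j' ∈ range (j+1), C ((-1:ℝ)^j' * ((q:ℝ)-1)^(j-j')) * (cp j' * cq n (j-j'))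

lemma KP_eval (n q j x : ℕ) (hx : x ≤ n) : (KP n q j).eval (x:ℝ) = kraw n q j x := by
  rw [KP, eval_finset_sum, kraw]
  apply Finset.sum_congr rfl
  intro j' _
  rw [eval_mul, eval_C, eval_mul, cp_eval, cq_eval n _ x hx]
  ring

lemma KP_natDegree (n q j : ℕ) : (KP n q j).natDegree ≤ j := by
  apply natDegree_sum_le_of_forall_le
  intro j' hj'
  apply (natDegree_C_mul_le _ _).trans
  apply (natDegree_mul_le).trans
  have := cp_natDegree j'
  have := cq_natDegree n (j - j')
  simp at hj'
  omega

lemma KP_coeff_aux (n q j : ℕ) : (KP n q j).coeff j = (-1:ℝ)^j * (q:ℝ)^j / j.factorial := by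
  rw [KP, finset_sum_coeff]
  have hstep : ∀ j' ∈ range (j+1),
      (C ((-1:ℝ)^j' * ((q:ℝ)-1)^(j-j')) * (cp j' * cq n (j-j'))).coeff j
      = (-1:ℝ)^j * ((q:ℝ)-1)^(j-j') * ((j'.factorial:ℝ))⁻¹ * (((j-j').factorial:ℝ))⁻¹ := by
    intro j' hj'
    simp only [mem_range] at hj'
    have hj'le : j' ≤ j := by omega
    have : j' + (j - j') = j := by omega
    have hc := coeff_mul_add_eq_of_natDegree_le (cp_natDegree j') (cq_natDegree n (j-j'))
    rw [this] at hc
    rw [coeff_C_mul, hc, cp_coeff, cq_coeff]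
    have : (-1:ℝ)^j' * (-1:ℝ)^(j-j') = (-1:ℝ)^j := by rw [← pow_add, this]
    rw [← this]; ring
  rw [Finset.sum_congr rfl hstep]
  -- now the binomial sum
  have hbin : ((q:ℝ))^j = ∑ j' ∈ range (j+1), ((q:ℝ)-1)^(j-j') * (j.choose j' : ℝ) := by
    have := add_pow (((q:ℝ))-1) 1 j
    simp only [one_pow, mul_one] at this
    calc ((q:ℝ))^j = (((q:ℝ)-1) + 1)^j := by ring_nf
    _ = ∑ j' ∈ range (j+1), ((q:ℝ)-1)^j' * (j.choose j' : ℝ) := by rw [this]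
    _ = ∑ j' ∈ range (j+1), ((q:ℝ)-1)^(j+1-1-j') * (j.choose (j+1-1-j') : ℝ) := by
        exact (Finset.sum_range_reflect (fun x => ((q:ℝ)-1)^x * (j.choose x : ℝ)) (j+1)).symm
    _ = ∑ j' ∈ range (j+1), ((q:ℝ)-1)^(j-j') * (j.choose j' : ℝ) := by
        apply Finset.sum_congr rfl
        intro k hk
        simp only [mem_range] at hk
        have h1 : j + 1 - 1 - k = j - k := by omega
        rw [h1, Nat.choose_symm (by omega : k ≤ j)]
  rw [eq_div_iff (by positivity : (j.factorial:ℝ) ≠ 0), Finset.sum_mul, hbin, Finset.mul_sum]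
  apply Finset.sum_congr rfl
  intro j' hj'
  simp only [mem_range] at hj'
  rw [Nat.cast_choose ℝ (by omega : j' ≤ j)]
  have h1 : (j'.factorial : ℝ) ≠ 0 := by positivity
  have h2 : ((j-j').factorial : ℝ) ≠ 0 := by positivity
  field_simp

lemma KP_coeff (n q j : ℕ) : (KP n q j).coeff j = (-(q:ℝ))^j / j.factorial := by
  conv_rhs => rw [neg_pow]
  exact KP_coeff_aux n q j

lemma coeff_one_add_C_mul_X_pow {R : Type*} [CommRing R] (b : R) (m k : ℕ) :
    ((1 + C b * X)^m).coeff k = (m.choose k : R) * b^k := by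
  rw [add_comm (1 : R[X]), add_pow]
  simp only [one_pow, mul_one]
  rw [finset_sum_coeff]
  have hterm : ∀ i ∈ range (m+1),
      ((C b * X)^i * (m.choose i : R[X])).coeff k
        = if i = k then (m.choose i : R) * b^i else 0 := by
    intro i _
    rw [mul_pow, ← C_eq_natCast, ← C_pow, mul_assoc, coeff_C_mul, coeff_mul_C, coeff_X_pow]
    rcases eq_or_ne i k with he | he
    · subst he; simp [mul_comm]
    · rw [if_neg (fun h => he h.symm), if_neg he]; ring
  rw [Finset.sum_congr rfl hterm, Finset.sum_ite_eq' (range (m+1)) k]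
  split_ifs with h
  · rfl
  · simp only [mem_range, not_lt] at h
    rw [Nat.choose_eq_zero_of_lt (by omega), Nat.cast_zero, zero_mul]

lemma coeff_one_sub_X_pow {R : Type*} [CommRing R] (m k : ℕ) :
    ((1 - X : R[X])^m).coeff k = (m.choose k : R) * (-1)^k := by
  have h : (1 - X : R[X]) = 1 + C (-1) * X := by
    rw [map_neg, C_1]; ring
  rw [h, coeff_one_add_C_mul_X_pow]

lemma coeff_genfun {R : Type*} [CommRing R] (b : R) (y x i : ℕ) :
    (((1 + C b * X)^y) * ((1 - X)^x)).coeff i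
      = ∑ j ∈ range (i+1),
          (-1:R)^j * b^(i-j) * (x.choose j : R) * (y.choose (i-j) : R) := by
  rw [coeff_mul, Finset.Nat.sum_antidiagonal_eq_sum_range_succ_mk]
  have h1 : ∀ k ∈ range (i+1),
      ((1 + C b * X : R[X])^y).coeff k * ((1 - X : R[X])^x).coeff (i-k)
        = (y.choose k : R) * b^k * ((x.choose (i-k) : R) * (-1)^(i-k)) := by
    intro k _
    rw [coeff_one_add_C_mul_X_pow, coeff_one_sub_X_pow]
  rw [Finset.sum_congr rfl h1, ← Finset.sum_range_reflect]
  apply Finset.sum_congr rfl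
  intro j hj
  simp only [mem_range] at hj
  have h2 : i + 1 - 1 - j = i - j := by omega
  have h3 : i - (i - j) = j := by omega
  rw [h2, h3]
  ring

lemma kraw_eq_coeff (n q x i : ℕ) :
    kraw n q i x = (((1 + C ((q:ℝ)-1) * X)^(n-x)) * ((1 - X)^x)).coeff i := by
  rw [coeff_genfun, kraw]

lemma kraw_zero_left (n q x : ℕ) : kraw n q 0 x = 1 := by
  simp [kraw]

lemma span (n q : ℕ) (hq : 1 ≤ q) :
    ∀ d (p : ℝ[X]), p.natDegree ≤ d →
      ∃ e : ℕ → ℝ, e d = p.coeff d * d.factorial / (-(q:ℝ))^d ∧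
        ∀ x : ℕ, x ≤ n → p.eval (x:ℝ) = ∑ j ∈ range (d+1), e j * kraw n q j x := by
  intro d
  induction d with
  | zero =>
    intro p hp
    refine ⟨fun _ => p.coeff 0, by simp, ?_⟩
    intro x hx
    rw [eval_eq_sum_range' (n := 1) (by omega : p.natDegree < 1)]
    simp [kraw_zero_left]
  | succ d ih =>
    intro p hp
    have hqR : (-(q:ℝ)) ≠ 0 := by
      simp only [neg_ne_zero]
      positivity
    have hτ : (-(q:ℝ))^(d+1) / ((d+1).factorial : ℝ) ≠ 0 := by
      apply div_ne_zero (pow_ne_zero _ hqR)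
      positivity
    set t : ℝ := p.coeff (d+1) / ((-(q:ℝ))^(d+1) / ((d+1).factorial : ℝ)) with ht
    set p' : ℝ[X] := p - C t * KP n q (d+1) with hp'
    have hdeg : p'.natDegree ≤ d := by
      apply natDegree_le_iff_coeff_eq_zero.mpr
      intro k hk
      rw [hp', coeff_sub, coeff_C_mul]
      rcases eq_or_lt_of_le (Nat.succ_le_of_lt hk) with he | hl
      · rw [← he, KP_coeff, ht, div_mul_cancel₀ _ hτ, sub_self]
      · rw [coeff_eq_zero_of_natDegree_lt (lt_of_le_of_lt hp hl),
          coeff_eq_zero_of_natDegree_lt (lt_of_le_of_lt (KP_natDegree n q (d+1)) hl)]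
        ring
    obtain ⟨e, he, hee⟩ := ih p' hdeg
    refine ⟨fun j => if j = d + 1 then t else e j, ?_, ?_⟩
    · simp only [if_pos rfl, ht, div_div_eq_mul_div, if_true]
    · intro x hx
      have hev : p.eval (x:ℝ) = p'.eval (x:ℝ) + t * kraw n q (d+1) x := by
        rw [hp']
        simp only [eval_sub, eval_mul, eval_C, KP_eval n q (d+1) x hx]
        ring
      rw [hev, Finset.sum_range_succ, hee x hx]
      simp only [if_pos rfl]
      congr 1
      apply Finset.sum_congr rfl
      intro k hk
      simp only [mem_range] at hk
      rw [if_neg (by omega)]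

lemma orth (n q i j : ℕ) :
    ∑ x ∈ range (n+1), (n.choose x : ℝ) * ((q:ℝ)-1)^x * (kraw n q i x * kraw n q j x)
      = if i = j then (q:ℝ)^n * ((q:ℝ)-1)^i * (n.choose i : ℝ) else 0 := by
  classical
  set b : ℝ := (q:ℝ) - 1 with hb
  set Pr : ℕ → ℝ[X] := fun x => (1 + C b * X)^(n-x) * (1 - X)^x with hPr
  set Bp : (Polynomial ℝ)[X] := C (C b * (1 - X)) * (1 - X) with hBp
  set Ap : (Polynomial ℝ)[X] := C (1 + C b * X) * (1 + C (C b) * X) with hAp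
  set E : (Polynomial ℝ)[X] := C (C b * X) * X with hE
  have hsum : Bp + Ap = C (C ((q:ℝ))) * (1 + E) := by
    have hq1 : ((q:ℝ)) = b + 1 := by rw [hb]; ring
    rw [hq1, hBp, hAp, hE]
    simp only [map_mul, map_sub, map_add, map_one]
    ring
  have hpow : ∑ x ∈ range (n+1), Bp^x * Ap^(n-x) * (n.choose x : (Polynomial ℝ)[X])
      = C (C ((q:ℝ)^n)) * (1 + E)^n := by
    rw [← add_pow, hsum, mul_pow, ← C_pow, ← C_pow]
  have hterm : ∀ x, ((Bp^x * Ap^(n-x) * (n.choose x : (Polynomial ℝ)[X])).coeff j).coeff i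
      = (n.choose x : ℝ) * b^x * (kraw n q i x * kraw n q j x) := by
    intro x
    have hmap : Polynomial.map (Polynomial.C : ℝ →+* ℝ[X]) (Pr x)
        = (1 + C (C b) * X)^(n-x) * (1 - X)^x := by
      simp only [hPr, Polynomial.map_mul, Polynomial.map_pow, Polynomial.map_add,
        Polynomial.map_one, Polynomial.map_sub, Polynomial.map_X, Polynomial.map_C]
    have h1 : Bp^x * Ap^(n-x) * (n.choose x : (Polynomial ℝ)[X])
        = C ((n.choose x : ℝ[X]) * (C b * (1 - X))^x * (1 + C b * X)^(n-x))
          * Polynomial.map (Polynomial.C : ℝ →+* ℝ[X]) (Pr x) := by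
      rw [hmap, hBp, hAp, ← C_eq_natCast]
      simp only [map_mul, map_pow, mul_pow, map_sub, map_add, map_one]
      ring
    rw [h1, coeff_C_mul, Polynomial.coeff_map, ← kraw_eq_coeff]
    have h2 : (n.choose x : ℝ[X]) * (C b * (1 - X))^x * (1 + C b * X)^(n-x)
          * C (kraw n q j x)
        = C ((n.choose x : ℝ) * b^x * kraw n q j x) * Pr x := by
      rw [hPr, ← C_eq_natCast]
      simp only [map_mul, map_pow, mul_pow, map_sub, map_add, map_one]
      ring
    rw [h2, coeff_C_mul, ← kraw_eq_coeff]
    ring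
  have hRHS : ((C (C ((q:ℝ)^n)) * (1 + E)^n).coeff j).coeff i
      = if i = j then (q:ℝ)^n * b^i * (n.choose i : ℝ) else 0 := by
    have hE1 : (1 + E)^n = ∑ k ∈ range (n+1), C ((C b * X)^k * (n.choose k : ℝ[X])) * X^k := by
      rw [add_comm (1 : (Polynomial ℝ)[X]), add_pow]
      apply Finset.sum_congr rfl
      intro k _
      rw [one_pow, mul_one, hE, ← C_eq_natCast (n.choose k)]
      simp only [map_mul, map_pow, mul_pow]
      ring
    rw [hE1, coeff_C_mul, finset_sum_coeff, Finset.mul_sum]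
    have hcol : ∀ k ∈ range (n+1),
        C ((q:ℝ)^n) * (C ((C b * X)^k * (n.choose k : ℝ[X])) * X^k).coeff j
          = if j = k then C ((q:ℝ)^n) * ((C b * X)^j * (n.choose j : ℝ[X])) else 0 := by
      intro k _
      rw [coeff_C_mul, coeff_X_pow]
      split_ifs with h
      · subst h; rw [mul_one]
      · rw [mul_zero, mul_zero]
    rw [Finset.sum_congr rfl hcol, Finset.sum_ite_eq (range (n+1)) j]
    have hval : (C ((q:ℝ)^n) * ((C b * X)^j * (n.choose j : ℝ[X]))).coeff i
        = if i = j then (q:ℝ)^n * b^i * (n.choose i : ℝ) else 0 := by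
      have hfold : C ((q:ℝ)^n) * ((C b * X)^j * (n.choose j : ℝ[X]))
          = C ((q:ℝ)^n * b^j * (n.choose j : ℝ)) * X^j := by
        rw [← C_eq_natCast]
        simp only [map_mul, map_pow, mul_pow]
        ring
      rw [hfold, coeff_C_mul, coeff_X_pow]
      split_ifs with h
      · subst h; rw [mul_one]
      · rw [mul_zero]
    by_cases hmem : j ∈ range (n+1)
    · rw [if_pos hmem]; exact hval
    · rw [if_neg hmem, coeff_zero]
      simp only [mem_range, not_lt] at hmem
      symm
      split_ifs with hij
      · subst hij
        rw [Nat.choose_eq_zero_of_lt (by omega), Nat.cast_zero, mul_zero]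
      · rfl
  rw [← hRHS, ← hpow, finset_sum_coeff, finset_sum_coeff]
  exact Finset.sum_congr rfl (fun x _ => (hterm x).symm)

lemma kraw_zero_right (n q j : ℕ) : kraw n q j 0 = ((q:ℝ)-1)^j * (n.choose j : ℝ) := by
  rw [kraw, Finset.sum_eq_single_of_mem 0 (mem_range.mpr (by omega))]
  · simp
  · intro m hm hm0
    rcases Nat.exists_eq_succ_of_ne_zero hm0 with ⟨m', rfl⟩
    simp



/-- Lemma 4.5: if a quasicode has support exactly
`a_1 < a_2 < ⋯ < a_s` (zero-indexed: `a 0 < ⋯ < a (s-1)`) and is a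
`(2s−1)`-design, then `h(x) = (a_1 − x)⋯(a_s − x)` is positive definite. -/
theorem design_annihilator_positiveDefinite {q n s : ℕ} (hq : 2 ≤ q) (hn : 1 ≤ n)
    {N : ℝ} {A : ℕ → ℝ} (hA : IsQuasicode q n N A)
    (a : ℕ → ℕ) (hmono : ∀ i, i + 1 < s → a i < a (i+1))
    (hsupp : supp n A = (Finset.range s).image a)
    (hdesign : IsDesign q n (2*s-1) A) :
    PositiveDefinite q n (fun x => ∏ i ∈ Finset.range s, ((a i : ℝ) - (x : ℝ))) := by
  classical
  obtain ⟨hnn, hdel, hsize, hz⟩ := hA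
  have hq1 : 1 ≤ q := by omega
  have hqb : (1:ℝ) ≤ (q:ℝ) - 1 := by
    have : (2:ℝ) ≤ (q:ℝ) := by exact_mod_cast hq
    linarith
  have hqpos : (0:ℝ) < (q:ℝ) := by
    have : (2:ℝ) ≤ (q:ℝ) := by exact_mod_cast hq
    linarith
  have hN : 1 ≤ N := by
    rw [← hsize]
    calc (1:ℝ) = A 0 := hz.symm
    _ ≤ ∑ i ∈ range (n+1), A i := by
        apply Finset.single_le_sum (f := A) (fun i hi => hnn i (by simpa using Nat.lt_succ_iff.mp (mem_range.mp hi)))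
        simp
  have hN0 : (0:ℝ) < N := lt_of_lt_of_le one_pos hN
  have hmono2 : ∀ i j, i < j → j < s → a i < a j := by
    intro i j hij hj
    induction j with
    | zero => omega
    | succ j ih =>
      rcases Nat.lt_succ_iff_lt_or_eq.mp hij with h | h
      · exact lt_trans (ih h (by omega)) (hmono j (by omega))
      · subst h; exact hmono i hj
  have hamem : ∀ k, k < s → a k ∈ Finset.Icc 1 n := by
    intro k hk
    have hm : a k ∈ (range s).image a := mem_image_of_mem a (mem_range.mpr hk)
    rw [← hsupp] at hm
    exact mem_of_mem_filter _ hm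
  have hsn : s ≤ n := by
    have hinj : Set.InjOn a ↑(range s) := by
      intro i hi j hj hij
      simp only [coe_range, Set.mem_Iio] at hi hj
      by_contra hne
      rcases lt_or_gt_of_ne hne with h | h
      · exact absurd hij (Nat.ne_of_lt (hmono2 i j h hj))
      · exact absurd hij.symm (Nat.ne_of_lt (hmono2 j i h hi))
    calc s = (range s).card := (card_range s).symm
    _ = ((range s).image a).card := (Finset.card_image_of_injOn hinj).symm
    _ ≤ (Finset.Icc 1 n).card := Finset.card_le_card (by
        intro x hx
        obtain ⟨k, hk, rfl⟩ := mem_image.mp hx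
        exact hamem k (mem_range.mp hk))
    _ = n := by rw [Nat.card_Icc]; omega
  set hP : ℝ[X] := ∏ k ∈ range s, (C ((a k : ℝ)) - X) with hhP
  have hPdeg : hP.natDegree ≤ s := natDegree_prod_C_sub_X_le _ s
  have hPcoeff : hP.coeff s = (-1:ℝ)^s := coeff_prod_C_sub_X _ s
  have hPeval : ∀ r : ℝ, hP.eval r = ∏ k ∈ range s, ((a k:ℝ) - r) := by
    intro r
    rw [hhP, eval_prod]
    simp
  obtain ⟨e, heS, hexp⟩ := span n q hq1 s hP hPdeg
  have hesnn : 0 ≤ e s := by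
    have hqs : ((q:ℝ))^s ≠ 0 := by positivity
    have : e s = (s.factorial : ℝ) / (q:ℝ)^s := by
      rw [heS, hPcoeff, neg_pow ((q:ℝ)) s]
      have h1 : ((-1:ℝ))^s ≠ 0 := pow_ne_zero _ (by norm_num)
      field_simp
    rw [this]
    positivity
  have hjnn : ∀ j, j < s → 0 ≤ e j := by
    intro j hj
    have hs1 : 1 ≤ s := by omega
    set gP : ℝ[X] := hP * KP n q j with hgP
    have hgdeg : gP.natDegree ≤ s + j :=
      natDegree_mul_le.trans (add_le_add hPdeg (KP_natDegree n q j))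
    obtain ⟨d, hdn, hd2s, dc, hgexp⟩ :
        ∃ d, d ≤ n ∧ d ≤ 2*s-1 ∧ ∃ dc : ℕ → ℝ,
          ∀ x : ℕ, x ≤ n → gP.eval (x:ℝ) = ∑ m ∈ range (d+1), dc m * kraw n q m x := by
      rcases le_or_gt (s + j) n with hle | hlt
      · obtain ⟨dc, _, hdc⟩ := span n q hq1 (s+j) gP hgdeg
        exact ⟨s+j, hle, by omega, dc, hdc⟩
      · set V : ℝ[X] := ∏ t ∈ range (n+1), (X - C ((t:ℕ):ℝ)) with hV
        have hVmonic : V.Monic := monic_prod_of_monic _ _ (fun t _ => monic_X_sub_C _)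
        have hVdeg : V.natDegree = n + 1 := natDegree_prod_X_sub_C _ _
        have hV1 : V ≠ 1 := by
          intro h1
          rw [h1, natDegree_one] at hVdeg
          omega
        have hr : (gP %ₘ V).natDegree ≤ n := by
          have := natDegree_modByMonic_lt gP hVmonic hV1
          omega
        obtain ⟨dc, _, hdc⟩ := span n q hq1 n (gP %ₘ V) hr
        refine ⟨n, le_rfl, by omega, dc, ?_⟩
        intro x hx
        rw [← hdc x hx]
        conv_lhs => rw [← modByMonic_add_div gP V]
        rw [eval_add, eval_mul]
        have hV0 : V.eval (x:ℝ) = 0 := by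
          rw [hV, eval_prod]
          apply Finset.prod_eq_zero (mem_range.mpr (by omega : x < n+1))
          simp
        rw [hV0, zero_mul, add_zero]
    have hS1a : ∑ x ∈ range (n+1), A x * gP.eval (x:ℝ)
        = (∏ k ∈ range s, (a k : ℝ)) * kraw n q j 0 := by
      rw [Finset.sum_eq_single_of_mem 0 (mem_range.mpr (by omega))]
      · have hK0 := KP_eval n q j 0 (by omega : (0:ℕ) ≤ n)
        rw [Nat.cast_zero] at hK0
        rw [hz, one_mul, hgP, eval_mul, Nat.cast_zero, hK0, hPeval]
        simp
      · intro x hx hx0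
        rcases eq_or_ne (A x) 0 with h | h
        · rw [h, zero_mul]
        · have hxn : x ≤ n := by simp only [mem_range] at hx; omega
          have hxs : x ∈ (range s).image a := by
            rw [← hsupp, supp, mem_filter]
            exact ⟨mem_Icc.mpr ⟨by omega, hxn⟩, h⟩
          obtain ⟨k, hk, hak⟩ := mem_image.mp hxs
          have hzero : hP.eval (x:ℝ) = 0 := by
            rw [hPeval]
            apply Finset.prod_eq_zero hk
            rw [hak, sub_self]
          rw [hgP, eval_mul, hzero, zero_mul, mul_zero]
    have hS1b : ∑ x ∈ range (n+1), A x * gP.eval (x:ℝ) = dc 0 * N := by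
      calc ∑ x ∈ range (n+1), A x * gP.eval (x:ℝ)
          = ∑ x ∈ range (n+1), ∑ m ∈ range (d+1), dc m * (A x * kraw n q m x) := by
            apply Finset.sum_congr rfl
            intro x hx
            rw [hgexp x (by simp only [Finset.mem_range] at hx; omega), Finset.mul_sum]
            apply Finset.sum_congr rfl
            intro m _
            ring
      _ = ∑ m ∈ range (d+1), dc m * ∑ x ∈ range (n+1), A x * kraw n q m x := by
            rw [Finset.sum_comm]
            exact Finset.sum_congr rfl (fun m _ => by rw [Finset.mul_sum])
      _ = dc 0 * N := by
            rw [Finset.sum_eq_single_of_mem 0 (mem_range.mpr (by omega))]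
            · rw [← hsize]
              congr 1
              apply Finset.sum_congr rfl
              intro x _
              rw [kraw_zero_left, mul_one]
            · intro m hm hm0
              rw [hdesign m (by omega) (by simp only [mem_range] at hm; omega), mul_zero]
    have hS2a : ∑ x ∈ range (n+1), (n.choose x : ℝ) * ((q:ℝ)-1)^x * gP.eval (x:ℝ)
        = dc 0 * ((q:ℝ)^n) := by
      calc ∑ x ∈ range (n+1), (n.choose x : ℝ) * ((q:ℝ)-1)^x * gP.eval (x:ℝ)
          = ∑ x ∈ range (n+1), ∑ m ∈ range (d+1),
              dc m * ((n.choose x : ℝ) * ((q:ℝ)-1)^x * (kraw n q m x * kraw n q 0 x)) := by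
            apply Finset.sum_congr rfl
            intro x hx
            rw [hgexp x (by simp only [Finset.mem_range] at hx; omega), Finset.mul_sum]
            apply Finset.sum_congr rfl
            intro m _
            rw [kraw_zero_left]
            ring
      _ = ∑ m ∈ range (d+1), dc m * ∑ x ∈ range (n+1),
              (n.choose x : ℝ) * ((q:ℝ)-1)^x * (kraw n q m x * kraw n q 0 x) := by
            rw [Finset.sum_comm]
            exact Finset.sum_congr rfl (fun m _ => by rw [Finset.mul_sum])
      _ = dc 0 * ((q:ℝ)^n) := by
            rw [Finset.sum_eq_single_of_mem 0 (mem_range.mpr (by omega))]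
            · rw [orth n q 0 0, if_pos rfl]
              simp
            · intro m hm hm0
              rw [orth n q m 0, if_neg hm0, mul_zero]
    have hS2b : ∑ x ∈ range (n+1), (n.choose x : ℝ) * ((q:ℝ)-1)^x * gP.eval (x:ℝ)
        = e j * ((q:ℝ)^n * ((q:ℝ)-1)^j * (n.choose j : ℝ)) := by
      calc ∑ x ∈ range (n+1), (n.choose x : ℝ) * ((q:ℝ)-1)^x * gP.eval (x:ℝ)
          = ∑ x ∈ range (n+1), ∑ m ∈ range (s+1),
              e m * ((n.choose x : ℝ) * ((q:ℝ)-1)^x * (kraw n q m x * kraw n q j x)) := by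
            apply Finset.sum_congr rfl
            intro x hx
            have hxn : x ≤ n := by simp only [Finset.mem_range] at hx; omega
            rw [hgP, eval_mul, hexp x hxn, KP_eval n q j x hxn, Finset.sum_mul, Finset.mul_sum]
            apply Finset.sum_congr rfl
            intro m _
            ring
      _ = ∑ m ∈ range (s+1), e m * ∑ x ∈ range (n+1),
              (n.choose x : ℝ) * ((q:ℝ)-1)^x * (kraw n q m x * kraw n q j x) := by
            rw [Finset.sum_comm]
            exact Finset.sum_congr rfl (fun m _ => by rw [Finset.mul_sum])
      _ = e j * ((q:ℝ)^n * ((q:ℝ)-1)^j * (n.choose j : ℝ)) := by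
            rw [Finset.sum_eq_single_of_mem j (mem_range.mpr (by omega))]
            · rw [orth n q j j, if_pos rfl]
            · intro m hm hm0
              rw [orth n q m j, if_neg hm0, mul_zero]
    -- conclude
    have hdc0 : 0 ≤ dc 0 := by
      have heq : dc 0 * N = (∏ k ∈ range s, (a k : ℝ)) * kraw n q j 0 := by
        rw [← hS1b, hS1a]
      have hrhs : 0 ≤ (∏ k ∈ range s, (a k : ℝ)) * kraw n q j 0 := by
        apply mul_nonneg
        · exact Finset.prod_nonneg (fun k _ => by positivity)
        · rw [kraw_zero_right]
          apply mul_nonneg (pow_nonneg (by linarith) j) (by positivity)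
      refine le_of_not_gt (fun hlt => ?_)
      have hneg := mul_neg_of_neg_of_pos hlt hN0
      rw [heq] at hneg
      exact absurd hrhs (not_le.mpr hneg)
    have heq2 : e j * ((q:ℝ)^n * ((q:ℝ)-1)^j * (n.choose j : ℝ)) = dc 0 * ((q:ℝ)^n) := by
      rw [← hS2b, hS2a]
    have hnormpos : 0 < (q:ℝ)^n * ((q:ℝ)-1)^j * (n.choose j : ℝ) := by
      have hcj : 0 < (n.choose j : ℝ) := by
        have : 0 < n.choose j := Nat.choose_pos (by omega)
        exact_mod_cast this
      exact mul_pos (mul_pos (pow_pos hqpos n) (pow_pos (by linarith) j)) hcj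
    have hnn2 : 0 ≤ dc 0 * ((q:ℝ)^n) := mul_nonneg hdc0 (by positivity)
    rw [← heq2] at hnn2
    refine le_of_not_gt (fun hlt => ?_)
    exact absurd hnn2 (not_le.mpr (mul_neg_of_neg_of_pos hlt hnormpos))
  refine ⟨fun m => if m ≤ s then e m else 0, ?_, ?_⟩
  · intro m _
    show 0 ≤ if m ≤ s then e m else 0
    split_ifs with h
    · rcases lt_or_eq_of_le h with h1 | h1
      · exact hjnn m h1
      · subst h1; exact hesnn
    · exact le_rfl
  · intro x hx
    have hxe := hexp x hx
    show ∏ k ∈ range s, ((a k:ℝ) - (x:ℝ)) = _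
    rw [← hPeval, hxe]
    beta_reduce
    rw [← Finset.sum_subset (Finset.range_subset_range.mpr (by omega : s+1 ≤ n+1))]
    · apply Finset.sum_congr rfl
      intro m hm
      rw [if_pos (by simp only [mem_range] at hm; omega)]
    · intro m hm hm2
      simp only [mem_range] at hm hm2
      rw [if_neg (by omega), zero_mul]
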